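/- arXiv:1011.4636 — 4 statements merged into one kernel-verified Lean document; each statement's English description precedes it below -/
import Mathlib

section
/- Let γ₁ and γ₂ be densely defined, closed, accretive, semisectorial quadratic forms on a Hilbert space h such that Dom γ₁ ∩ Dom γ₂ is dense in h. Then the sum form γ = γ₁ + γ₂, with domain Dom γ₁ ∩ Dom γ₂, is again closed, accretive and semisectorial. -/
/-!
STATEMENT 3: Let γ₁ and γ₂ be densely defined, closed, accretive, semisectorial
quadratic forms on a Hilbert space h such that Dom γ₁ ∩ Dom γ₂ is dense in h.
Then the sum form γ = γ₁ + γ₂, with domain Dom γ₁ ∩ Dom γ₂, is again closed,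
accretive and semisectorial.
-/

open Filter

noncomputable section

variable {h : Type*} [NormedAddCommGroup h] [InnerProductSpace ℂ h]

/-- A quadratic form with domain: a submodule `dom` together with the form values
`q` (only the values on `dom` are relevant). -/
structure QuadForm (h : Type*) [NormedAddCommGroup h] [InnerProductSpace ℂ h] where
  dom : Submodule ℂ h
  q : h → ℂ

namespace QuadForm

/-- Accretive: `Re q[u] ≥ 0` on the domain. -/
def Accretive (γ : QuadForm h) : Prop := ∀ u ∈ γ.dom, 0 ≤ (γ.q u).re

/-- Semisectorial: `|Im q[u]| ≤ C ‖u‖₊² = C (Re q[u] + ‖u‖²)` on the domain, for some `C ≥ 0`. -/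
def Semisectorial (γ : QuadForm h) : Prop :=
  ∃ C : ℝ, 0 ≤ C ∧ ∀ u ∈ γ.dom, |(γ.q u).im| ≤ C * ((γ.q u).re + ‖u‖ ^ 2)

/-- Closed: the domain is complete with respect to the norm
`‖u‖₊ = (Re q[u] + ‖u‖²)^{1/2}`, expressed via Cauchy sequences: every sequence in the
domain which is Cauchy for `‖·‖₊` has a limit `x` in the domain, with `‖uₙ − x‖₊ → 0`. -/
def IsClosedForm (γ : QuadForm h) : Prop :=
  ∀ u : ℕ → h, (∀ n, u n ∈ γ.dom) →
    (∀ ε > (0:ℝ), ∃ N, ∀ m ≥ N, ∀ n ≥ N,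
      (γ.q (u m - u n)).re + ‖u m - u n‖ ^ 2 < ε) →
    ∃ x ∈ γ.dom, Tendsto (fun n => (γ.q (u n - x)).re + ‖u n - x‖ ^ 2) atTop (nhds 0)

/-- The sum of two quadratic forms, with domain the intersection of the domains. -/
def add (γ₁ γ₂ : QuadForm h) : QuadForm h :=
  ⟨γ₁.dom ⊓ γ₂.dom, fun u => γ₁.q u + γ₂.q u⟩

end QuadForm

theorem sum_of_closed_accretive_semisectorial_forms
    (γ₁ γ₂ : QuadForm h)
    (hd₁ : Dense (γ₁.dom : Set h)) (hd₂ : Dense (γ₂.dom : Set h))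
    (hc₁ : γ₁.IsClosedForm) (hc₂ : γ₂.IsClosedForm)
    (ha₁ : γ₁.Accretive) (ha₂ : γ₂.Accretive)
    (hs₁ : γ₁.Semisectorial) (hs₂ : γ₂.Semisectorial)
    (hdense : Dense ((γ₁.dom ⊓ γ₂.dom : Submodule ℂ h) : Set h)) :
    (γ₁.add γ₂).IsClosedForm ∧ (γ₁.add γ₂).Accretive ∧ (γ₁.add γ₂).Semisectorial := by
  refine ⟨?_, ?_, ?_⟩
  · -- Closedness
    intro u hu hcau
    have hu₁ : ∀ n, u n ∈ γ₁.dom := fun n => (hu n).1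
    have hu₂ : ∀ n, u n ∈ γ₂.dom := fun n => (hu n).2
    have hd : ∀ m n, u m - u n ∈ γ₁.dom ⊓ γ₂.dom := fun m n =>
      Submodule.sub_mem _ (hu m) (hu n)
    have key : ∀ m n, (γ₁.q (u m - u n)).re + ‖u m - u n‖ ^ 2 ≤
        ((γ₁.add γ₂).q (u m - u n)).re + ‖u m - u n‖ ^ 2 := by
      intro m n
      have := ha₂ _ (hd m n).2
      simp only [QuadForm.add, Complex.add_re]
      nlinarith
    have key' : ∀ m n, (γ₂.q (u m - u n)).re + ‖u m - u n‖ ^ 2 ≤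
        ((γ₁.add γ₂).q (u m - u n)).re + ‖u m - u n‖ ^ 2 := by
      intro m n
      have := ha₁ _ (hd m n).1
      simp only [QuadForm.add, Complex.add_re]
      nlinarith
    obtain ⟨x₁, hx₁, ht₁⟩ := hc₁ u hu₁ (by
      intro ε hε
      obtain ⟨N, hN⟩ := hcau ε hε
      exact ⟨N, fun m hm n hn => lt_of_le_of_lt (key m n) (hN m hm n hn)⟩)
    obtain ⟨x₂, hx₂, ht₂⟩ := hc₂ u hu₂ (by
      intro ε hε
      obtain ⟨N, hN⟩ := hcau ε hε
      exact ⟨N, fun m hm n hn => lt_of_le_of_lt (key' m n) (hN m hm n hn)⟩)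
    -- u n → x₁ and u n → x₂ in h, hence x₁ = x₂
    have hsq₁ : Tendsto (fun n => ‖u n - x₁‖ ^ 2) atTop (nhds 0) := by
      refine squeeze_zero (fun n => by positivity) (fun n => ?_) ht₁
      have := ha₁ _ (Submodule.sub_mem _ (hu₁ n) hx₁)
      linarith
    have hsq₂ : Tendsto (fun n => ‖u n - x₂‖ ^ 2) atTop (nhds 0) := by
      refine squeeze_zero (fun n => by positivity) (fun n => ?_) ht₂
      have := ha₂ _ (Submodule.sub_mem _ (hu₂ n) hx₂)
      linarith
    have hlim : ∀ (x : h), Tendsto (fun n => ‖u n - x‖ ^ 2) atTop (nhds 0) →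
        Tendsto u atTop (nhds x) := by
      intro x hx
      rw [tendsto_iff_norm_sub_tendsto_zero]
      have : Tendsto (fun n => Real.sqrt (‖u n - x‖ ^ 2)) atTop (nhds (Real.sqrt 0)) :=
        (Real.continuous_sqrt.continuousAt).tendsto.comp hx
      simpa [Real.sqrt_sq (norm_nonneg _)] using this
    have hxeq : x₁ = x₂ := tendsto_nhds_unique (hlim x₁ hsq₁) (hlim x₂ hsq₂)
    subst hxeq
    refine ⟨x₁, ⟨hx₁, hx₂⟩, ?_⟩
    have : Tendsto (fun n => ((γ₁.q (u n - x₁)).re + ‖u n - x₁‖ ^ 2) +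
        ((γ₂.q (u n - x₁)).re + ‖u n - x₁‖ ^ 2) - ‖u n - x₁‖ ^ 2) atTop (nhds (0 + 0 - 0)) :=
      (ht₁.add ht₂).sub hsq₁
    simp only [add_zero, sub_zero] at this
    convert this using 2 with n
    simp only [QuadForm.add, Complex.add_re]
    ring
  · -- Accretive
    intro v hv
    have h1 := ha₁ v hv.1
    have h2 := ha₂ v hv.2
    simp only [QuadForm.add, Complex.add_re]
    linarith
  · -- Semisectorial
    obtain ⟨C₁, hC₁, h₁⟩ := hs₁
    obtain ⟨C₂, hC₂, h₂⟩ := hs₂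
    refine ⟨C₁ + C₂, by linarith, fun v hv => ?_⟩
    have h1 := h₁ v hv.1
    have h2 := h₂ v hv.2
    have r1 := ha₁ v hv.1
    have r2 := ha₂ v hv.2
    simp only [QuadForm.add, Complex.add_re, Complex.add_im]
    calc |(γ₁.q v).im + (γ₂.q v).im| ≤ |(γ₁.q v).im| + |(γ₂.q v).im| := abs_add_le _ _
      _ ≤ C₁ * ((γ₁.q v).re + ‖v‖ ^ 2) + C₂ * ((γ₂.q v).re + ‖v‖ ^ 2) := by linarith
      _ ≤ (C₁ + C₂) * ((γ₁.q v).re + (γ₂.q v).re + ‖v‖ ^ 2) := by nlinarith [sq_nonneg ‖v‖]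

end
end

section
/- Let γ be a quadratic form on a Hilbert space h with dense domain Q, let L, L̃ be operators from h to h⊗k with domain Q, and let C be a contraction on h⊗k. Define the quadratic form Γ on h ⊕ (h⊗k) with domain Q ⊕ (h⊗k) by Γ[(u,ξ)] := γ[u] − (⟨ξ, Lu⟩ + ⟨L̃u, ξ⟩ + ⟨ξ, (C−I)ξ⟩), and the operator ΔF(u,ξ) := (0, Lu + (C−I)ξ). If ‖ΔF ζ‖² ≤ 2 Re Γ[ζ] for all ζ ∈ Q ⊕ (h⊗k), then ‖Lu‖² ≤ 2 Re γ[u] and ‖L̃u‖² ≤ 2 Re γ[u] for all u ∈ Q. -/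
/-!
STATEMENT 4: With Γ[(u,ξ)] := γ[u] − (⟨ξ, Lu⟩ + ⟨L̃u, ξ⟩ + ⟨ξ, (C−I)ξ⟩) and
ΔF(u,ξ) := (0, Lu + (C−I)ξ) on Q ⊕ (h⊗k), the structure inequality
‖ΔF ζ‖² ≤ 2 Re Γ[ζ] implies ‖Lu‖² ≤ 2 Re γ[u] and ‖L̃u‖² ≤ 2 Re γ[u] on Q.

The Hilbert space h⊗k is modelled by an abstract Hilbert space `HK` (its tensor
product structure plays no role).
-/

noncomputable section

theorem structure_inequality_truncation
    {h HK : Type*} [NormedAddCommGroup h] [InnerProductSpace ℂ h]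
    [NormedAddCommGroup HK] [InnerProductSpace ℂ HK]
    (Q : Submodule ℂ h) (γ : h → ℂ) (L Ltilde : h → HK)
    (C : HK →L[ℂ] HK) (hC : ‖C‖ ≤ 1)
    (hineq : ∀ u ∈ Q, ∀ ξ : HK,
      ‖L u + (C ξ - ξ)‖ ^ 2 ≤
        2 * (γ u - ((inner ℂ ξ (L u) : ℂ) + (inner ℂ (Ltilde u) ξ : ℂ)
            + (inner ℂ ξ (C ξ - ξ) : ℂ))).re) :
    ∀ u ∈ Q, ‖L u‖ ^ 2 ≤ 2 * (γ u).re ∧ ‖Ltilde u‖ ^ 2 ≤ 2 * (γ u).re := by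
  intro u hu
  constructor
  · have h0 := hineq u hu 0
    simpa using h0
  · have h1 := hineq u hu (Ltilde u)
    set A := L u with hA
    set ξ := Ltilde u with hξ
    set B := C ξ with hB
    -- rewrite LHS
    have hLHS : ‖A + (B - ξ)‖ ^ 2
        = ‖A + B‖ ^ 2 - 2 * (inner ℂ (ξ) (A + B) : ℂ).re + ‖ξ‖ ^ 2 := by
      have e : A + (B - ξ) = (A + B) - ξ := by abel
      rw [e, @norm_sub_sq ℂ, inner_re_symm]
      simp [RCLike.re_to_complex, inner_add_right]
    -- rewrite RHS
    have hRHS : (γ u - ((inner ℂ ξ A : ℂ) + (inner ℂ ξ ξ : ℂ)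
            + (inner ℂ ξ (B - ξ) : ℂ))).re
        = (γ u).re - (inner ℂ ξ (A + B) : ℂ).re := by
      rw [inner_sub_right, inner_add_right]
      have hself : (inner ℂ ξ ξ : ℂ).re = ‖ξ‖ ^ 2 := by
        simpa [RCLike.re_to_complex] using inner_self_eq_norm_sq (𝕜 := ℂ) ξ
      simp only [Complex.sub_re, Complex.add_re, hself]
      ring
    have hξξ : (inner ℂ (Ltilde u) ξ : ℂ) = (inner ℂ ξ ξ : ℂ) := by rw [hξ]
    rw [hξξ, hLHS, hRHS] at h1
    nlinarith [sq_nonneg (‖A + B‖), norm_nonneg (A + B)]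

end
end

section
/- Conversely: let F ∈ B(h ⊕ (h⊗k)) satisfy q(F) := F* + F + F*ΔF = 0 and r(F) := F + F* + FΔF* = 0, where Δ is the projection onto h⊗k. Then F has block matrix form [[iH − L*L/2, −L*C], [L, C − I]] for some bounded selfadjoint H on h, some L ∈ B(h; h⊗k), and some unitary C on h⊗k. -/
/-!
STATEMENT 7 (converse of Statement 6): If F ∈ B(h ⊕ (h⊗k)) satisfies
q(F) := F* + F + F*ΔF = 0 and r(F) := F + F* + FΔF* = 0, then F has block form
[[iH − L*L/2, −L*C], [L, C − I]] for some bounded selfadjoint H, bounded L and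
unitary C.
-/

open ContinuousLinearMap

noncomputable section

namespace BlockFormAux

variable {h HK : Type*} [NormedAddCommGroup h] [InnerProductSpace ℂ h] [CompleteSpace h]
    [NormedAddCommGroup HK] [InnerProductSpace ℂ HK] [CompleteSpace HK]

local notation "E" => WithLp 2 (h × HK)

def eL : E ≃L[ℂ] h × HK := WithLp.prodContinuousLinearEquiv 2 ℂ h HK

def ι₁ : h →L[ℂ] E := (eL (h := h) (HK := HK)).symm.toContinuousLinearMap ∘L .inl ℂ h HK
def ι₂ : HK →L[ℂ] E := (eL (h := h) (HK := HK)).symm.toContinuousLinearMap ∘L .inr ℂ h HK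
def π₁ : E →L[ℂ] h := (ContinuousLinearMap.fst ℂ h HK) ∘L (eL (h := h) (HK := HK)).toContinuousLinearMap
def π₂ : E →L[ℂ] HK := (ContinuousLinearMap.snd ℂ h HK) ∘L (eL (h := h) (HK := HK)).toContinuousLinearMap

lemma adj_ι₁ : adjoint (ι₁ (h := h) (HK := HK)) = π₁ := by
  symm; rw [ContinuousLinearMap.eq_adjoint_iff]
  intro x u; simp [π₁, ι₁, eL, WithLp.prod_inner_apply]

lemma adj_ι₂ : adjoint (ι₂ (h := h) (HK := HK)) = π₂ := by
  symm; rw [ContinuousLinearMap.eq_adjoint_iff]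
  intro x u; simp [π₂, ι₂, eL, WithLp.prod_inner_apply]

lemma adj_π₁ : adjoint (π₁ (h := h) (HK := HK)) = ι₁ := by
  rw [← adj_ι₁, adjoint_adjoint]

lemma adj_π₂ : adjoint (π₂ (h := h) (HK := HK)) = ι₂ := by
  rw [← adj_ι₂, adjoint_adjoint]

omit [CompleteSpace h] [CompleteSpace HK] in
lemma decomp (x : E) : x = ι₁ (π₁ x) + ι₂ (π₂ x) := by
  apply (eL (h := h) (HK := HK)).injective
  simp [ι₁, ι₂, π₁, π₂, Prod.ext_iff]

omit [CompleteSpace h] [CompleteSpace HK] in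
lemma symm_eq (u : h) (ξ : HK) :
    (WithLp.equiv 2 (h × HK)).symm (u, ξ) = ι₁ u + ι₂ ξ := by
  apply (eL (h := h) (HK := HK)).injective
  simp [ι₁, ι₂, eL, Prod.ext_iff]

end BlockFormAux

open BlockFormAux

set_option maxHeartbeats 1000000 in
theorem block_form_from_unitarity_conditions
    {h HK : Type*} [NormedAddCommGroup h] [InnerProductSpace ℂ h] [CompleteSpace h]
    [NormedAddCommGroup HK] [InnerProductSpace ℂ HK] [CompleteSpace HK]
    (F Δ : WithLp 2 (h × HK) →L[ℂ] WithLp 2 (h × HK))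
    (hΔ : ∀ u : h, ∀ ξ : HK,
      Δ ((WithLp.equiv 2 (h × HK)).symm (u, ξ)) = (WithLp.equiv 2 (h × HK)).symm (0, ξ))
    (hq : adjoint F + F + (adjoint F).comp (Δ.comp F) = 0)
    (hr : F + adjoint F + F.comp (Δ.comp (adjoint F)) = 0) :
    ∃ (H : h →L[ℂ] h) (L : h →L[ℂ] HK) (C : HK →L[ℂ] HK),
      IsSelfAdjoint H ∧
      (adjoint C).comp C = 1 ∧ C.comp (adjoint C) = 1 ∧
      ∀ u : h, ∀ ξ : HK,
        F ((WithLp.equiv 2 (h × HK)).symm (u, ξ)) =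
          (WithLp.equiv 2 (h × HK)).symm
            (Complex.I • H u - (1/2 : ℂ) • (adjoint L) (L u) - (adjoint L) (C ξ),
             L u + C ξ - ξ) := by
  classical
  -- block components
  set A : h →L[ℂ] h := π₁ ∘L F ∘L ι₁ with hA
  set B : HK →L[ℂ] h := π₁ ∘L F ∘L ι₂ with hBdef
  set Lop : h →L[ℂ] HK := π₂ ∘L F ∘L ι₁ with hL
  set D : HK →L[ℂ] HK := π₂ ∘L F ∘L ι₂ with hD
  have adjA : adjoint A = π₁ ∘L adjoint F ∘L ι₁ := by
    rw [hA, adjoint_comp, adjoint_comp, adj_π₁, adj_ι₁]; rfl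
  have adjL : adjoint Lop = π₁ ∘L adjoint F ∘L ι₂ := by
    rw [hL, adjoint_comp, adjoint_comp, adj_π₂, adj_ι₁]; rfl
  have adjD : adjoint D = π₂ ∘L adjoint F ∘L ι₂ := by
    rw [hD, adjoint_comp, adjoint_comp, adj_π₂, adj_ι₂]; rfl
  have hAapp : ∀ u : h, A u = π₁ (F (ι₁ u)) := fun _ => rfl
  have hBapp : ∀ ξ : HK, B ξ = π₁ (F (ι₂ ξ)) := fun _ => rfl
  have hLapp : ∀ u : h, Lop u = π₂ (F (ι₁ u)) := fun _ => rfl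
  have hDapp : ∀ ξ : HK, D ξ = π₂ (F (ι₂ ξ)) := fun _ => rfl
  have hA'app : ∀ u : h, adjoint A u = π₁ (adjoint F (ι₁ u)) := fun u => by
    rw [adjA]; rfl
  have hL'app : ∀ ξ : HK, adjoint Lop ξ = π₁ (adjoint F (ι₂ ξ)) := fun ξ => by
    rw [adjL]; rfl
  have hD'app : ∀ ξ : HK, adjoint D ξ = π₂ (adjoint F (ι₂ ξ)) := fun ξ => by
    rw [adjD]; rfl
  -- Δ acts as ι₂ ∘ π₂
  have hΔ' : ∀ x : WithLp 2 (h × HK), Δ x = ι₂ (π₂ x) := by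
    intro x
    have h1 := hΔ (π₁ x) (π₂ x)
    rw [symm_eq, symm_eq] at h1
    have hx : ι₁ (π₁ x) + ι₂ (π₂ x) = x := (decomp x).symm
    rw [hx] at h1
    simpa using h1
  have hqx : ∀ x, adjoint F x + F x + adjoint F (Δ (F x)) = 0 := by
    intro x
    have := ContinuousLinearMap.ext_iff.mp hq x
    simpa using this
  have hrx : ∀ x, F x + adjoint F x + F (Δ (adjoint F x)) = 0 := by
    intro x
    have := ContinuousLinearMap.ext_iff.mp hr x
    simpa using this
  -- block equations
  have q11 : ∀ u : h, adjoint A u + A u + adjoint Lop (Lop u) = 0 := by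
    intro u
    have h1 := hqx (ι₁ u)
    have h2 := congrArg π₁ h1
    rw [hΔ' (F (ι₁ u))] at h2
    rw [map_add, map_add, map_zero] at h2
    simp only [hA'app, hL'app, hAapp, hLapp]
    exact h2
  have q12 : ∀ ξ : HK, adjoint Lop ξ + B ξ + adjoint Lop (D ξ) = 0 := by
    intro ξ
    have h1 := hqx (ι₂ ξ)
    have h2 := congrArg π₁ h1
    rw [hΔ' (F (ι₂ ξ))] at h2
    rw [map_add, map_add, map_zero] at h2
    simp only [hL'app, hBapp, hDapp]
    exact h2
  have q22 : ∀ ξ : HK, adjoint D ξ + D ξ + adjoint D (D ξ) = 0 := by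
    intro ξ
    have h1 := hqx (ι₂ ξ)
    have h2 := congrArg π₂ h1
    rw [hΔ' (F (ι₂ ξ))] at h2
    rw [map_add, map_add, map_zero] at h2
    simp only [hD'app, hDapp]
    exact h2
  have r22 : ∀ ξ : HK, D ξ + adjoint D ξ + D (adjoint D ξ) = 0 := by
    intro ξ
    have h1 := hrx (ι₂ ξ)
    have h2 := congrArg π₂ h1
    rw [hΔ' (adjoint F (ι₂ ξ))] at h2
    rw [map_add, map_add, map_zero] at h2
    simp only [hD'app, hDapp]
    exact h2
  -- the data
    -- H = (A - A*)/(2i)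
  refine ⟨(-(Complex.I/2)) • (A - adjoint A), Lop, D + 1, ?_, ?_, ?_, ?_⟩
  · -- selfadjoint
    rw [IsSelfAdjoint, star_smul, star_sub, star_eq_adjoint, star_eq_adjoint,
      adjoint_adjoint]
    have : star (-(Complex.I/2)) = Complex.I/2 := by
      simp [Complex.ext_iff]
      norm_num
    rw [this]
    module
  · -- C* C = 1
    ext ξ
    have hadj : adjoint (D + 1) = adjoint D + 1 := by
      rw [← star_eq_adjoint, star_add, star_one, star_eq_adjoint]
    have key : (adjoint (D + 1)) ((D + 1) ξ)
        = (adjoint D ξ + D ξ + adjoint D (D ξ)) + ξ := by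
      rw [hadj]
      simp only [ContinuousLinearMap.add_apply, ContinuousLinearMap.one_apply, map_add]
      abel
    simp only [ContinuousLinearMap.coe_comp', Function.comp_apply,
      ContinuousLinearMap.one_apply]
    rw [key, q22, zero_add]
  · -- C C* = 1
    ext ξ
    have hadj : adjoint (D + 1) = adjoint D + 1 := by
      rw [← star_eq_adjoint, star_add, star_one, star_eq_adjoint]
    have key : (D + 1) ((adjoint (D + 1)) ξ)
        = (D ξ + adjoint D ξ + D (adjoint D ξ)) + ξ := by
      rw [hadj]
      simp only [ContinuousLinearMap.add_apply, ContinuousLinearMap.one_apply, map_add]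
      abel
    simp only [ContinuousLinearMap.coe_comp', Function.comp_apply,
      ContinuousLinearMap.one_apply]
    rw [key, r22, zero_add]
  · -- the block formula
    intro u ξ
    rw [symm_eq, symm_eq, map_add]
    have hF1 : F (ι₁ u) = ι₁ (A u) + ι₂ (Lop u) := by
      rw [hAapp, hLapp]; exact decomp _
    have hF2 : F (ι₂ ξ) = ι₁ (B ξ) + ι₂ (D ξ) := by
      rw [hBapp, hDapp]; exact decomp _
    rw [hF1, hF2]
    have hAu : A u = Complex.I • ((-(Complex.I/2)) • (A - adjoint A)) u
        - (1/2 : ℂ) • adjoint Lop (Lop u) := by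
      have h1 := q11 u
      have h2 : adjoint A u = -(A u) - adjoint Lop (Lop u) := by
        rw [add_assoc, add_eq_zero_iff_eq_neg] at h1
        rw [h1]; abel
      simp only [ContinuousLinearMap.smul_apply, ContinuousLinearMap.sub_apply, h2]
      rw [smul_smul]
      have hI : Complex.I * (-(Complex.I/2)) = 1/2 := by
        rw [mul_neg, ← mul_div_assoc, Complex.I_mul_I]
        norm_num
      rw [hI]
      module
    have hBξ : B ξ = -(adjoint Lop ((D + 1) ξ)) := by
      have h1 := q12 ξ
      have h2 : B ξ + (adjoint Lop ξ + adjoint Lop (D ξ)) = 0 := by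
        rw [← h1]; abel
      rw [add_eq_zero_iff_eq_neg] at h2
      rw [h2]
      simp only [ContinuousLinearMap.add_apply, ContinuousLinearMap.one_apply, map_add]
      abel
    have hfst : Complex.I • ((-(Complex.I/2)) • (A - adjoint A)) u
        - (1/2 : ℂ) • adjoint Lop (Lop u) - adjoint Lop ((D + 1) ξ)
        = A u + B ξ := by
      rw [hBξ, hAu]; abel
    have hsnd : Lop u + (D + 1) ξ - ξ = Lop u + D ξ := by
      simp only [ContinuousLinearMap.add_apply, ContinuousLinearMap.one_apply]
      abel
    rw [hfst, hsnd, map_add, map_add]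
    abel

end
end

section
/- If F₁ ∈ B(h ⊕ (h⊗k₁)) satisfies q(F₁) ≤ 0 and F₂ ∈ B(h ⊕ (h⊗k₂)) satisfies q(F₂) ≤ 0, then their concatenation product F = F₁ ⊞ F₂ ∈ B(h ⊕ (h⊗k₁) ⊕ (h⊗k₂)), given in block form by F = [[K₁+K₂, M₁, M₂],[L₁, C₁−I₁, 0],[L₂, 0, C₂−I₂]] where Fᵢ = [[Kᵢ, Mᵢ],[Lᵢ, Cᵢ−Iᵢ]], satisfies q(F) ≤ 0. -/
/-!
STATEMENT 10: If q(F₁) ≤ 0 and q(F₂) ≤ 0 then the concatenation product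
F = F₁ ⊞ F₂ = [[K₁+K₂, M₁, M₂],[L₁, C₁−I, 0],[L₂, 0, C₂−I]] satisfies q(F) ≤ 0,
where q(F) := F* + F + F*ΔF and Δ projects onto the noise components.

Spaces: h ⊕ (h⊗kᵢ) is modelled by `WithLp 2 (h × Ki)` and
h ⊕ (h⊗k₁) ⊕ (h⊗k₂) by `WithLp 2 (h × WithLp 2 (K1 × K2))`; "T ≤ 0" means
Re⟨z, Tz⟩ ≤ 0 for all z.
-/

open ContinuousLinearMap

noncomputable section

theorem concatenation_qF_nonpos
    {h K1 K2 : Type*} [NormedAddCommGroup h] [InnerProductSpace ℂ h] [CompleteSpace h]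
    [NormedAddCommGroup K1] [InnerProductSpace ℂ K1] [CompleteSpace K1]
    [NormedAddCommGroup K2] [InnerProductSpace ℂ K2] [CompleteSpace K2]
    (K₁ K₂ : h →L[ℂ] h) (M₁ : K1 →L[ℂ] h) (M₂ : K2 →L[ℂ] h)
    (L₁ : h →L[ℂ] K1) (L₂ : h →L[ℂ] K2)
    (C₁ : K1 →L[ℂ] K1) (C₂ : K2 →L[ℂ] K2)
    (F₁ Δ₁ : WithLp 2 (h × K1) →L[ℂ] WithLp 2 (h × K1))
    (F₂ Δ₂ : WithLp 2 (h × K2) →L[ℂ] WithLp 2 (h × K2))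
    (F Δ : WithLp 2 (h × WithLp 2 (K1 × K2)) →L[ℂ] WithLp 2 (h × WithLp 2 (K1 × K2)))
    (hΔ₁ : ∀ (u : h) (ξ : K1),
      Δ₁ ((WithLp.equiv 2 (h × K1)).symm (u, ξ)) = (WithLp.equiv 2 (h × K1)).symm (0, ξ))
    (hΔ₂ : ∀ (u : h) (ξ : K2),
      Δ₂ ((WithLp.equiv 2 (h × K2)).symm (u, ξ)) = (WithLp.equiv 2 (h × K2)).symm (0, ξ))
    (hΔ : ∀ (u : h) (ξ : WithLp 2 (K1 × K2)),
      Δ ((WithLp.equiv 2 _).symm (u, ξ)) = (WithLp.equiv 2 _).symm (0, ξ))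
    (hF₁ : ∀ (u : h) (ξ : K1),
      F₁ ((WithLp.equiv 2 (h × K1)).symm (u, ξ)) =
        (WithLp.equiv 2 (h × K1)).symm (K₁ u + M₁ ξ, L₁ u + C₁ ξ - ξ))
    (hF₂ : ∀ (u : h) (ξ : K2),
      F₂ ((WithLp.equiv 2 (h × K2)).symm (u, ξ)) =
        (WithLp.equiv 2 (h × K2)).symm (K₂ u + M₂ ξ, L₂ u + C₂ ξ - ξ))
    (hF : ∀ (u : h) (ξ₁ : K1) (ξ₂ : K2),
      F ((WithLp.equiv 2 _).symm (u, (WithLp.equiv 2 (K1 × K2)).symm (ξ₁, ξ₂))) =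
        (WithLp.equiv 2 _).symm
          (K₁ u + K₂ u + M₁ ξ₁ + M₂ ξ₂,
           (WithLp.equiv 2 (K1 × K2)).symm (L₁ u + C₁ ξ₁ - ξ₁, L₂ u + C₂ ξ₂ - ξ₂)))
    (hq₁ : ∀ z, (inner ℂ z ((adjoint F₁ + F₁ + (adjoint F₁).comp (Δ₁.comp F₁)) z) : ℂ).re ≤ 0)
    (hq₂ : ∀ z, (inner ℂ z ((adjoint F₂ + F₂ + (adjoint F₂).comp (Δ₂.comp F₂)) z) : ℂ).re ≤ 0) :
    ∀ z, (inner ℂ z ((adjoint F + F + (adjoint F).comp (Δ.comp F)) z) : ℂ).re ≤ 0 := by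
  intro z
  set u : h := ((WithLp.equiv 2 _) z).1 with hu
  set ξ₁ : K1 := ((WithLp.equiv 2 (K1 × K2)) ((WithLp.equiv 2 _) z).2).1 with hx1
  set ξ₂ : K2 := ((WithLp.equiv 2 (K1 × K2)) ((WithLp.equiv 2 _) z).2).2 with hx2
  have hz : z = (WithLp.equiv 2 _).symm (u, (WithLp.equiv 2 (K1 × K2)).symm (ξ₁, ξ₂)) := by
    rfl
  have h1 := hq₁ ((WithLp.equiv 2 (h × K1)).symm (u, ξ₁))
  have h2 := hq₂ ((WithLp.equiv 2 (h × K2)).symm (u, ξ₂))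
  rw [hz]
  simp only [add_apply, comp_apply, hF, hΔ, hF₁, hΔ₁, hF₂, hΔ₂, inner_add_right,
    adjoint_inner_right, hF, hF₁, hF₂, WithLp.prod_inner_apply,
    inner_add_left, inner_zero_right, add_zero, zero_add,
    Complex.add_re] at h1 h2 ⊢
  simp only [WithLp.equiv_symm_apply, WithLp.ofLp_toLp, inner_add_left, inner_add_right, inner_zero_right,
    add_zero, zero_add, Complex.add_re, Complex.zero_re] at h1 h2 ⊢
  linarith

end
end
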